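/- arXiv:0910.4698 — 2 statements merged into one kernel-verified Lean document; each statement's English description precedes it below -/
import Mathlib

section
/- Suppose for every AC^0-computable Boolean function f : {0,1}^n → {0,1} there exist polynomials p_ℓ, p_u : ℝ^n → ℝ of degree n^{o(1)} such that (i) p_ℓ(x) ≤ f(x) ≤ p_u(x) for all x ∈ {0,1}^n, (ii) E_{x∼U}[p_u(x) - p_ℓ(x)] = o(1), and (iii) both p_ℓ and p_u can be written as linear combinations of terms, p(x) = ∑_C α_C C(x), with ∑_C |α_C| 2^{-|C|} = n^{o(1)}. Then for every distribution D over {0,1}^n that is ε-almost k-wise independent with ε = 1/n^{Ω(1)} and k ≥ the degree bound, |Pr_{x∼D}[f(x)=1] - Pr_{x∼U}[f(x)=1]| = o(1). -/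
open Finset

/-- A term over `{0,1}^n`: the product of literals `x_i` for `i ∈ S` and `(1-x_i)` for
`i ∈ T`, evaluated at a Boolean point (value in `{0,1}`). -/
def termVal {n : ℕ} (S T : Finset (Fin n)) (x : Fin n → Bool) : ℝ :=
  if (∀ i ∈ S, x i = true) ∧ (∀ i ∈ T, x i = false) then 1 else 0

lemma termVal_prod {n : ℕ} (S T : Finset (Fin n)) (hd : Disjoint S T) (x : Fin n → Bool) :
    termVal S T x = ∏ i : Fin n,
      (if i ∈ S then (if x i = true then (1:ℝ) else 0)
       else if i ∈ T then (if x i = false then 1 else 0) else 1) := by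
  unfold termVal
  by_cases h : (∀ i ∈ S, x i = true) ∧ (∀ i ∈ T, x i = false)
  · rw [if_pos h, eq_comm, Finset.prod_eq_one]
    intro i _
    by_cases hiS : i ∈ S
    · simp [hiS, h.1 i hiS]
    · by_cases hiT : i ∈ T
      · simp [hiS, hiT, h.2 i hiT]
      · simp [hiS, hiT]
  · rw [if_neg h, eq_comm]
    by_cases hS : ∀ i ∈ S, x i = true
    · have hT : ¬ ∀ i ∈ T, x i = false := fun hT => h ⟨hS, hT⟩
      push_neg at hT
      obtain ⟨i, hiT, hxi⟩ := hT
      have hiS : i ∉ S := fun hiS => (Finset.disjoint_left.mp hd hiS) hiT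
      apply Finset.prod_eq_zero (Finset.mem_univ i)
      simp [hiS, hiT, hxi]
    · push_neg at hS
      obtain ⟨i, hiS, hxi⟩ := hS
      apply Finset.prod_eq_zero (Finset.mem_univ i)
      simp [hiS, hxi]

lemma sum_termVal {n : ℕ} (S T : Finset (Fin n)) (hd : Disjoint S T) :
    ∑ x : Fin n → Bool, termVal S T x
      = 2 ^ n * (2:ℝ) ^ (-(S.card + T.card : ℤ)) := by
  have hcard : (S ∪ T).card = S.card + T.card := Finset.card_union_of_disjoint hd
  have hle : S.card + T.card ≤ n := by
    rw [← hcard]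
    simpa using Finset.card_le_card (Finset.subset_univ (S ∪ T))
  simp_rw [termVal_prod S T hd]
  rw [← Fintype.prod_sum (fun (i : Fin n) (b : Bool) =>
      (if i ∈ S then (if b = true then (1:ℝ) else 0)
       else if i ∈ T then (if b = false then 1 else 0) else 1))]
  have hfac : ∀ i : Fin n, (∑ b : Bool,
      (if i ∈ S then (if b = true then (1:ℝ) else 0)
       else if i ∈ T then (if b = false then 1 else 0) else 1))
      = if i ∈ S ∪ T then 1 else 2 := by
    intro i
    by_cases hiS : i ∈ S
    · simp [hiS, Finset.mem_union]
    · by_cases hiT : i ∈ T <;> simp [hiS, hiT, Finset.mem_union]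
  simp_rw [hfac]
  rw [← Finset.prod_mul_prod_compl (S ∪ T)]
  have h1 : ∏ i ∈ S ∪ T, (if i ∈ S ∪ T then (1:ℝ) else 2) = 1 := by
    apply Finset.prod_eq_one; intro i hi; simp [hi]
  have h2 : ∏ i ∈ (S ∪ T)ᶜ, (if i ∈ S ∪ T then (1:ℝ) else 2) = 2 ^ (n - (S.card + T.card)) := by
    have hc : ∀ i ∈ (S ∪ T)ᶜ, (if i ∈ S ∪ T then (1:ℝ) else 2) = 2 := by
      intro i hi
      rw [Finset.mem_compl] at hi
      rw [if_neg hi]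
    rw [Finset.prod_congr rfl hc, Finset.prod_const]
    congr 1
    rw [Finset.card_compl, hcard]
    simp
  rw [h1, h2, one_mul]
  have h2ne : (2:ℝ) ≠ 0 := by norm_num
  rw [← zpow_natCast (2:ℝ) (n - (S.card + T.card)), ← zpow_natCast (2:ℝ) n,
    ← zpow_add₀ h2ne]
  congr 1
  omega

/-- Low-fat sandwiching implies the Generalized Linial–Nisan conclusion (quantitative
core, for fixed `n`): if `f : {0,1}^n → {0,1}` admits degree-`≤ k` low-fat sandwiching
polynomials `p_ℓ ≤ f ≤ p_u` with `E_U[p_u - p_ℓ] ≤ δ` and coefficient sums at most `M`,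
then for every `ε`-almost `k`-wise independent distribution `D`,
`|E_D[f] - E_U[f]| ≤ δ + εM`. -/
theorem lowfat_sandwich_implies_gln (n k : ℕ) (ε δ M : ℝ) (hε : 0 ≤ ε)
    (D : (Fin n → Bool) → ℝ) (hD0 : ∀ x, 0 ≤ D x) (hD1 : ∑ x, D x = 1)
    (hind : ∀ S T : Finset (Fin n), Disjoint S T → S.card + T.card ≤ k →
      (1 - ε) * (2 : ℝ) ^ (-(S.card + T.card : ℤ)) ≤ ∑ x, D x * termVal S T x ∧
      ∑ x, D x * termVal S T x ≤ (1 + ε) * (2 : ℝ) ^ (-(S.card + T.card : ℤ)))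
    (f : (Fin n → Bool) → ℝ) (hf : ∀ x, f x = 0 ∨ f x = 1)
    (α β : Finset (Fin n) × Finset (Fin n) → ℝ)
    (hα : ∀ p, α p ≠ 0 → Disjoint p.1 p.2 ∧ p.1.card + p.2.card ≤ k)
    (hβ : ∀ p, β p ≠ 0 → Disjoint p.1 p.2 ∧ p.1.card + p.2.card ≤ k)
    (hsand : ∀ x, (∑ p : Finset (Fin n) × Finset (Fin n), α p * termVal p.1 p.2 x) ≤ f x
      ∧ f x ≤ ∑ p : Finset (Fin n) × Finset (Fin n), β p * termVal p.1 p.2 x)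
    (hαM : ∑ p : Finset (Fin n) × Finset (Fin n),
        |α p| * (2 : ℝ) ^ (-(p.1.card + p.2.card : ℤ)) ≤ M)
    (hβM : ∑ p : Finset (Fin n) × Finset (Fin n),
        |β p| * (2 : ℝ) ^ (-(p.1.card + p.2.card : ℤ)) ≤ M)
    (hδ : (∑ x, ((∑ p : Finset (Fin n) × Finset (Fin n), β p * termVal p.1 p.2 x)
              - ∑ p : Finset (Fin n) × Finset (Fin n), α p * termVal p.1 p.2 x)) / 2 ^ n
        ≤ δ) :
    |(∑ x, D x * f x) - (∑ x, f x) / 2 ^ n| ≤ δ + ε * M := by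
  have h2n : (0:ℝ) < 2 ^ n := by positivity
  -- key estimate, per sandwiching polynomial
  have key : ∀ γ : Finset (Fin n) × Finset (Fin n) → ℝ,
      (∀ p, γ p ≠ 0 → Disjoint p.1 p.2 ∧ p.1.card + p.2.card ≤ k) →
      (∑ p : Finset (Fin n) × Finset (Fin n),
        |γ p| * (2 : ℝ) ^ (-(p.1.card + p.2.card : ℤ)) ≤ M) →
      |(∑ x, D x * (∑ p : Finset (Fin n) × Finset (Fin n), γ p * termVal p.1 p.2 x))
        - (∑ x, (∑ p : Finset (Fin n) × Finset (Fin n), γ p * termVal p.1 p.2 x)) / 2 ^ n|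
        ≤ ε * M := by
    intro γ hγ hγM
    have h1 : (∑ x, D x * (∑ p : Finset (Fin n) × Finset (Fin n), γ p * termVal p.1 p.2 x))
        = ∑ p : Finset (Fin n) × Finset (Fin n), γ p * (∑ x, D x * termVal p.1 p.2 x) := by
      simp_rw [Finset.mul_sum]
      rw [Finset.sum_comm]
      exact Finset.sum_congr rfl fun p _ => Finset.sum_congr rfl fun x _ => by ring
    have h2 : (∑ x, (∑ p : Finset (Fin n) × Finset (Fin n), γ p * termVal p.1 p.2 x)) / 2 ^ n
        = ∑ p : Finset (Fin n) × Finset (Fin n),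
            γ p * (2 : ℝ) ^ (-(p.1.card + p.2.card : ℤ)) := by
      rw [Finset.sum_comm, Finset.sum_div]
      apply Finset.sum_congr rfl
      intro p _
      rw [← Finset.mul_sum]
      by_cases hp : γ p = 0
      · simp [hp]
      · rw [sum_termVal _ _ (hγ p hp).1]
        field_simp
    rw [h1, h2, ← Finset.sum_sub_distrib]
    refine (Finset.abs_sum_le_sum_abs _ _).trans ?_
    have step : ∀ p ∈ (Finset.univ : Finset (Finset (Fin n) × Finset (Fin n))),
        |γ p * (∑ x, D x * termVal p.1 p.2 x)
          - γ p * (2 : ℝ) ^ (-(p.1.card + p.2.card : ℤ))|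
        ≤ ε * (|γ p| * (2 : ℝ) ^ (-(p.1.card + p.2.card : ℤ))) := by
      intro p _
      by_cases hp : γ p = 0
      · simp [hp]
      · obtain ⟨hlo, hhi⟩ := hind p.1 p.2 (hγ p hp).1 (hγ p hp).2
        rw [← mul_sub, abs_mul]
        have hz : (0:ℝ) < (2 : ℝ) ^ (-(p.1.card + p.2.card : ℤ)) := by positivity
        have habs : |(∑ x, D x * termVal p.1 p.2 x)
            - (2 : ℝ) ^ (-(p.1.card + p.2.card : ℤ))|
            ≤ ε * (2 : ℝ) ^ (-(p.1.card + p.2.card : ℤ)) := by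
          rw [abs_le]
          constructor <;> nlinarith
        calc |γ p| * |(∑ x, D x * termVal p.1 p.2 x)
              - (2 : ℝ) ^ (-(p.1.card + p.2.card : ℤ))|
            ≤ |γ p| * (ε * (2 : ℝ) ^ (-(p.1.card + p.2.card : ℤ))) :=
              mul_le_mul_of_nonneg_left habs (abs_nonneg _)
          _ = ε * (|γ p| * (2 : ℝ) ^ (-(p.1.card + p.2.card : ℤ))) := by ring
    refine (Finset.sum_le_sum step).trans ?_
    rw [← Finset.mul_sum]
    exact mul_le_mul_of_nonneg_left hγM hε
  have keyα := key α hα hαM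
  have keyβ := key β hβ hβM
  set A : (Fin n → Bool) → ℝ :=
    fun x => ∑ p : Finset (Fin n) × Finset (Fin n), α p * termVal p.1 p.2 x with hA
  set B : (Fin n → Bool) → ℝ :=
    fun x => ∑ p : Finset (Fin n) × Finset (Fin n), β p * termVal p.1 p.2 x with hB
  have hDfB : ∑ x, D x * f x ≤ ∑ x, D x * B x :=
    Finset.sum_le_sum fun x _ => mul_le_mul_of_nonneg_left (hsand x).2 (hD0 x)
  have hDfA : ∑ x, D x * A x ≤ ∑ x, D x * f x :=
    Finset.sum_le_sum fun x _ => mul_le_mul_of_nonneg_left (hsand x).1 (hD0 x)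
  have hsum1 : ∑ x, f x ≤ ∑ x, B x := Finset.sum_le_sum fun x _ => (hsand x).2
  have hsum2 : ∑ x, A x ≤ ∑ x, f x := Finset.sum_le_sum fun x _ => (hsand x).1
  have hBA : (∑ x, B x) - (∑ x, A x) = ∑ x, (B x - A x) := (Finset.sum_sub_distrib _ _).symm
  have hδ' : (∑ x, B x) / 2 ^ n - (∑ x, A x) / 2 ^ n ≤ δ := by
    rw [div_sub_div_same, hBA]
    simpa using hδ
  have hdiv1 : (∑ x, f x) / 2 ^ n ≤ (∑ x, B x) / 2 ^ n := by gcongr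
  have hdiv2 : (∑ x, A x) / 2 ^ n ≤ (∑ x, f x) / 2 ^ n := by gcongr
  rw [abs_le] at keyα keyβ ⊢
  constructor <;> [skip; skip] <;> nlinarith [keyα.1, keyα.2, keyβ.1, keyβ.2]
end

section
/- Fix s ∈ {0,1}^n and let D[s] be the distribution over functions f : {0,1}^n → {-1,1} given by the equal mixture of: (A) each f(x) independently equals 1 with probability 1/2 + (-1)^{s·x}/(2√N), and (B) each f(x) independently equals 1 with probability 1/2 - (-1)^{s·x}/(2√N), where N = 2^n. Then the probability of a fixed function f under D[s] equals 2^{-(N+1)} · (1 - 1/N)^{N/2} · [((1+1/√N)/(1-1/√N))^{√N f̂(s)/2} + ((1-1/√N)/(1+1/√N))^{√N f̂(s)/2}], where f̂(s) is the Fourier coefficient of f at s. -/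
open Finset

private lemma key_rpow (a b : ℝ) (ha : 0 < a) (hb : 0 < b) (N k : ℕ) (hk : k ≤ N) :
    (a * b) ^ ((N : ℝ) / 2) * (a / b) ^ ((2 * (k : ℝ) - (N : ℝ)) / 2)
      = a ^ k * b ^ (N - k) := by
  have hNk : ((N - k : ℕ) : ℝ) = (N : ℝ) - k := by
    push_cast [Nat.cast_sub hk]; ring
  rw [← Real.rpow_natCast a k, ← Real.rpow_natCast b (N - k), hNk,
    Real.mul_rpow ha.le hb.le, Real.div_rpow ha.le hb.le, div_eq_mul_inv (a ^ _),
    ← Real.rpow_neg hb.le, mul_mul_mul_comm, ← Real.rpow_add ha, ← Real.rpow_add hb]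
  congr 1 <;> · congr 1; ring

/-- Exact probability of a fixed function `f : {0,1}^n → {-1,1}` under the distribution
`D[s]`, the equal mixture of: (A) each `f(x) = 1` independently with probability
`1/2 + (-1)^{s·x}/(2√N)`, and (B) each `f(x) = 1` independently with probability
`1/2 - (-1)^{s·x}/(2√N)` (where `N = 2^n`). The probability equals
`2^{-(N+1)} (1-1/N)^{N/2} [((1+1/√N)/(1-1/√N))^{√N f̂(s)/2} + ((1-1/√N)/(1+1/√N))^{√N f̂(s)/2}]`. -/
theorem prob_under_biased_mixture (n : ℕ) (hn : 1 ≤ n) (s : Fin n → Bool)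
    (f : (Fin n → Bool) → ℝ) (hf : ∀ x, f x = 1 ∨ f x = -1) :
    (1 / 2) *
      ((∏ x : Fin n → Bool,
          (1 / 2 + (-1 : ℝ) ^ ((Finset.univ.filter fun i => s i && x i).card) * f x
            / (2 * Real.sqrt (2 ^ n))))
        + ∏ x : Fin n → Bool,
          (1 / 2 - (-1 : ℝ) ^ ((Finset.univ.filter fun i => s i && x i).card) * f x
            / (2 * Real.sqrt (2 ^ n))))
    = (1 - 1 / (2 ^ n : ℝ)) ^ (2 ^ (n - 1)) / 2 ^ (2 ^ n + 1) *
        (((1 + 1 / Real.sqrt (2 ^ n)) / (1 - 1 / Real.sqrt (2 ^ n)))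
            ^ (Real.sqrt (2 ^ n) *
                ((1 / Real.sqrt (2 ^ n)) *
                  ∑ x : Fin n → Bool,
                    (-1 : ℝ) ^ ((Finset.univ.filter fun i => s i && x i).card) * f x)
                / 2)
          + ((1 - 1 / Real.sqrt (2 ^ n)) / (1 + 1 / Real.sqrt (2 ^ n)))
            ^ (Real.sqrt (2 ^ n) *
                ((1 / Real.sqrt (2 ^ n)) *
                  ∑ x : Fin n → Bool,
                    (-1 : ℝ) ^ ((Finset.univ.filter fun i => s i && x i).card) * f x)
                / 2)) := by
  classical
  set c := Real.sqrt (2 ^ n) with hcdef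
  have h2n : (1:ℝ) < 2 ^ n := by
    have := pow_le_pow_right₀ (by norm_num : (1:ℝ) ≤ 2) hn
    simp at this; linarith
  have hc0 : 0 < c := Real.sqrt_pos.mpr (by positivity)
  have hc2 : c ^ 2 = 2 ^ n := Real.sq_sqrt (by positivity)
  have hc1 : 1 < c := by nlinarith
  set a : ℝ := 1/2 + 1/(2*c) with hadef
  set b : ℝ := 1/2 - 1/(2*c) with hbdef
  have ha : 0 < a := by positivity
  have hb : 0 < b := by
    have h1 : 1/(2*c) < 1/2 := by
      rw [div_lt_div_iff₀ (by positivity) (by norm_num)]; linarith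
    rw [hbdef]; linarith
  set ε : (Fin n → Bool) → ℝ :=
    fun x => (-1 : ℝ) ^ ((Finset.univ.filter fun i => s i && x i).card) * f x with hεdef
  have hεx : ∀ x : Fin n → Bool,
      (-1 : ℝ) ^ ((Finset.univ.filter fun i => s i && x i).card) * f x = ε x :=
    fun _ => rfl
  have hεpm : ∀ x, ε x = 1 ∨ ε x = -1 := by
    intro x
    have hεeq : ε x
        = (-1 : ℝ) ^ ((Finset.univ.filter fun i => s i && x i).card) * f x := rfl
    rcases Nat.even_or_odd ((Finset.univ.filter fun i => s i && x i).card) with h | h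
    · rw [hεeq, h.neg_one_pow]; rcases hf x with h2 | h2 <;> simp [h2]
    · rw [hεeq, h.neg_one_pow]; rcases hf x with h2 | h2 <;> simp [h2]
  set T := Finset.univ.filter (fun x : Fin n → Bool => ε x = 1) with hT
  set k := T.card with hk
  have hcard : Fintype.card (Fin n → Bool) = 2 ^ n := by simp
  have hkN : k ≤ 2 ^ n := by
    rw [← hcard, ← Finset.card_univ]; exact Finset.card_filter_le _ _
  have hcardnot : (Finset.univ.filter (fun x : Fin n → Bool => ¬ ε x = 1)).card = 2 ^ n - k := by
    have h := Finset.card_filter_add_card_filter_not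
      (s := (Finset.univ : Finset (Fin n → Bool))) (p := fun x => ε x = 1)
    rw [Finset.card_univ, hcard] at h
    simp only [← hT] at h ⊢
    omega
  have hnotT : ∀ x : Fin n → Bool, ¬ ε x = 1 → ε x = -1 := by
    intro x hx; rcases hεpm x with h | h; exact absurd h hx; exact h
  have e1A : ∀ x ∈ Finset.univ.filter (fun x : Fin n → Bool => ε x = 1),
      (1/2 + ε x / (2*c)) = a := by
    intro x hx
    rw [(Finset.mem_filter.mp hx).2, hadef]
  have e2A : ∀ x ∈ Finset.univ.filter (fun x : Fin n → Bool => ¬ ε x = 1),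
      (1/2 + ε x / (2*c)) = b := by
    intro x hx
    rw [hnotT x (Finset.mem_filter.mp hx).2, hbdef]
    ring
  have e1B : ∀ x ∈ Finset.univ.filter (fun x : Fin n → Bool => ε x = 1),
      (1/2 - ε x / (2*c)) = b := by
    intro x hx
    rw [(Finset.mem_filter.mp hx).2, hbdef]
  have e2B : ∀ x ∈ Finset.univ.filter (fun x : Fin n → Bool => ¬ ε x = 1),
      (1/2 - ε x / (2*c)) = a := by
    intro x hx
    rw [hnotT x (Finset.mem_filter.mp hx).2, hadef]
    ring
  have hprodA : (∏ x : Fin n → Bool, (1/2 + ε x / (2*c))) = a ^ k * b ^ (2^n - k) := by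
    rw [← Finset.prod_filter_mul_prod_filter_not Finset.univ (fun x => ε x = 1),
      Finset.prod_congr rfl e1A, Finset.prod_congr rfl e2A,
      Finset.prod_const, Finset.prod_const, hcardnot, ← hT, ← hk]
  have hprodB : (∏ x : Fin n → Bool, (1/2 - ε x / (2*c))) = b ^ k * a ^ (2^n - k) := by
    rw [← Finset.prod_filter_mul_prod_filter_not Finset.univ (fun x => ε x = 1),
      Finset.prod_congr rfl e1B, Finset.prod_congr rfl e2B,
      Finset.prod_const, Finset.prod_const, hcardnot, ← hT, ← hk]
  have hsum : (∑ x : Fin n → Bool, ε x) = 2 * (k : ℝ) - 2 ^ n := by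
    have s1 : ∑ x ∈ Finset.univ.filter (fun x : Fin n → Bool => ε x = 1), ε x
        = ∑ _x ∈ Finset.univ.filter (fun x : Fin n → Bool => ε x = 1), (1:ℝ) :=
      Finset.sum_congr rfl (fun x hx => (Finset.mem_filter.mp hx).2)
    have s2 : ∑ x ∈ Finset.univ.filter (fun x : Fin n → Bool => ¬ ε x = 1), ε x
        = ∑ _x ∈ Finset.univ.filter (fun x : Fin n → Bool => ¬ ε x = 1), (-1:ℝ) :=
      Finset.sum_congr rfl (fun x hx => hnotT x (Finset.mem_filter.mp hx).2)
    rw [← Finset.sum_filter_add_sum_filter_not Finset.univ (fun x => ε x = 1), s1, s2]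
    simp only [Finset.sum_const, nsmul_eq_mul, mul_one, mul_neg_one]
    rw [hcardnot, ← hT, ← hk]
    push_cast [Nat.cast_sub hkN]
    ring
  -- rewrite goal in terms of ε, a, b
  simp only [hεx]
  rw [hsum, hprodA, hprodB]
  have hexp : c * ((1/c) * (2 * (k : ℝ) - 2 ^ n)) / 2 = (2 * (k:ℝ) - 2^n) / 2 := by
    field_simp
  rw [hexp]
  have h1c : (0:ℝ) < 1 - 1/c := by
    have : 1/c < 1 := (div_lt_one hc0).mpr hc1
    linarith
  have h1c' : (0:ℝ) < 1 + 1/c := by positivity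
  have hab1 : (1 + 1/c) / (1 - 1/c) = a / b := by
    rw [div_eq_div_iff (ne_of_gt h1c) (ne_of_gt hb), hadef, hbdef]
    have hcne : c ≠ 0 := hc0.ne'
    field_simp
  have hab2 : (1 - 1/c) / (1 + 1/c) = b / a := by
    rw [div_eq_div_iff (ne_of_gt h1c') (ne_of_gt ha), hadef, hbdef]
    have hcne : c ≠ 0 := hc0.ne'
    field_simp
  rw [hab1, hab2]
  have h4ab : (1 : ℝ) - 1 / 2 ^ n = 4 * (a * b) := by
    rw [hadef, hbdef, ← hc2]
    field_simp
    ring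
  rw [h4ab]
  have hpow : (2:ℝ) * 2 ^ (n - 1) = 2 ^ n := by
    rw [← pow_succ']
    congr 1
    omega
  have h4 : ((4 : ℝ) * (a*b)) ^ (2 ^ (n-1)) = 2 ^ (2^n) * (a*b) ^ (((2:ℝ)^n)/2) := by
    rw [mul_pow, show (4:ℝ) = 2^2 by norm_num, ← pow_mul,
      ← Real.rpow_natCast (a*b) (2^(n-1))]
    congr 2
    · have : 2 * 2 ^ (n-1) = 2 ^ n := by
        rw [← pow_succ']; congr 1; omega
      omega
    · push_cast
      rw [eq_div_iff (by norm_num : (2:ℝ) ≠ 0), mul_comm]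
      exact hpow
  rw [h4]
  have keyA := key_rpow a b ha hb (2^n) k hkN
  have keyB := key_rpow b a hb ha (2^n) k hkN
  push_cast at keyA keyB
  rw [mul_comm b a] at keyB
  rw [← keyA, ← keyB, pow_succ]
  field_simp
end
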